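/- On any reflexive, transitive, strongly convergent frame with constant domain D and predicate P : D → W → Prop, the formula [B]P(d) → [B][K^MS_FS] is valid; consequently so is [K^MS_FS] → [B][K^MS_FS]: if [K^MS_FS] holds at w (there is a ∈ D with P(a) at all R-successors of w, and for all b, [B]P(b) at w implies P(b) at w), then [K^MS_FS] holds at every R_B-successor of w. -/
import Mathlib

def RB {W : Type*} (R : W → W → Prop) (w u : W) : Prop := ∀ v, R w v → R v u

theorem KMSFS_to_B_KMSFS {W : Type*} [Nonempty W] {D : Type*} [Nonempty D]
    (R : W → W → Prop) (P : D → W → Prop)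
    (hrefl : ∀ w, R w w) (htrans : ∀ w v u, R w v → R v u → R w u)
    (hconv : ∀ w, ∃ u, ∀ v, R w v → R v u)
    (w : W)
    (h : (∃ a, ∀ v, R w v → P a v) ∧ (∀ b, (∀ u, RB R w u → P b u) → P b w)) :
    ∀ v, RB R w v →
      ((∃ a, ∀ x, R v x → P a x) ∧ (∀ b, (∀ u, RB R v u → P b u) → P b v)) := by
  intro v hv
  have hwv : R w v := hv w (hrefl w)
  obtain ⟨⟨a, ha⟩, _⟩ := h
  refine ⟨⟨a, fun x hx => ha x (htrans w v x hwv hx)⟩, fun b hb => ?_⟩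
  exact hb v (fun x hx => hv x (htrans w v x hwv hx))
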